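/- Let q^{-1} = y_0y_1 + y_2y_3 ∈ ℂ[y_0,y_1,y_2,y_3]. For a_0,a_1,a_2,a_3 ∈ ℂ set p_l = a_1y_0 + a_0y_1 + a_3y_2 + a_2y_3 and q_l = (1/2)p_l^2 − (1/3)(a_0a_1 + a_2a_3)·q^{-1}. If a_0a_1 + a_2a_3 ≠ 0, then q_l is not a product of two homogeneous linear forms in ℂ[y_0,…,y_3] (its rank as a quadratic form is at least 3). If a_0a_1 + a_2a_3 = 0, then q_l = (1/2)p_l^2. -/

import Mathlib

open MvPolynomial

/-- The inverse quadric `q^{-1} = y_0y_1 + y_2y_3`. -/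
noncomputable def qQinv : MvPolynomial (Fin 4) ℂ := X 0 * X 1 + X 2 * X 3

/-- The polar `p_l = a_1y_0 + a_0y_1 + a_3y_2 + a_2y_3` of `l = a_0x_0+a_1x_1+a_2x_2+a_3x_3`. -/
noncomputable def polarL (a0 a1 a2 a3 : ℂ) : MvPolynomial (Fin 4) ℂ :=
  C a1 * X 0 + C a0 * X 1 + C a3 * X 2 + C a2 * X 3

/-- `q_l = (1/2)p_l^2 − (1/3)(a_0a_1 + a_2a_3)·q^{-1}`. -/
noncomputable def qL (a0 a1 a2 a3 : ℂ) : MvPolynomial (Fin 4) ℂ :=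
  C (1 / 2 : ℂ) * polarL a0 a1 a2 a3 ^ 2 - C ((a0 * a1 + a2 * a3) / 3) * qQinv

lemma degree_one_single (m : Fin 4 →₀ ℕ) (hm : m.degree = 1) :
    ∃ i, m = Finsupp.single i 1 := by
  have hdeg : m.degree = ∑ i : Fin 4, m i := by
    rw [Finsupp.degree]
    exact Finset.sum_subset (Finset.subset_univ _)
      (fun x _ hx => Finsupp.notMem_support_iff.mp hx)
  rw [hdeg, Fin.sum_univ_four] at hm
  have h : (m 0 = 1 ∧ m 1 = 0 ∧ m 2 = 0 ∧ m 3 = 0) ∨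
      (m 0 = 0 ∧ m 1 = 1 ∧ m 2 = 0 ∧ m 3 = 0) ∨
      (m 0 = 0 ∧ m 1 = 0 ∧ m 2 = 1 ∧ m 3 = 0) ∨
      (m 0 = 0 ∧ m 1 = 0 ∧ m 2 = 0 ∧ m 3 = 1) := by omega
  rcases h with h | h | h | h
  · exact ⟨0, by ext j; fin_cases j <;> simp [Finsupp.single_apply] <;> omega⟩
  · exact ⟨1, by ext j; fin_cases j <;> simp [Finsupp.single_apply] <;> omega⟩
  · exact ⟨2, by ext j; fin_cases j <;> simp [Finsupp.single_apply] <;> omega⟩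
  · exact ⟨3, by ext j; fin_cases j <;> simp [Finsupp.single_apply] <;> omega⟩

lemma degree_single_one (j : Fin 4) : (Finsupp.single j 1 : Fin 4 →₀ ℕ).degree = 1 := by
  rw [Finsupp.degree_apply, Finsupp.support_single_ne_zero _ one_ne_zero,
    Finset.sum_singleton, Finsupp.single_eq_same]

lemma linear_rep (u : MvPolynomial (Fin 4) ℂ) (hu : u.IsHomogeneous 1) :
    u = ∑ i : Fin 4, C (u.coeff (Finsupp.single i 1)) * X i := by
  apply MvPolynomial.ext
  intro m
  rw [MvPolynomial.coeff_sum]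
  by_cases hm : m.degree = 1
  · obtain ⟨i, rfl⟩ := degree_one_single m hm
    have key : ∀ j : Fin 4,
        coeff (Finsupp.single i 1) (C (u.coeff (Finsupp.single j 1)) * X j)
          = if j = i then u.coeff (Finsupp.single i 1) else 0 := by
      intro j
      rw [coeff_C_mul, coeff_X']
      by_cases hji : j = i
      · subst hji; simp
      · rw [if_neg, if_neg hji]
        · ring
        · exact fun hc => hji ((Finsupp.single_left_inj one_ne_zero).mp hc)
    simp [key]
  · rw [hu.coeff_eq_zero hm]
    symm
    apply Finset.sum_eq_zero
    intro j _
    rw [coeff_C_mul, coeff_X']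
    rw [if_neg]
    · ring
    · rintro rfl
      exact hm (degree_single_one j)

/-- If `a_0a_1 + a_2a_3 ≠ 0` then `q_l` is not a product of two homogeneous linear forms
(its rank as a quadratic form is at least 3); if `a_0a_1 + a_2a_3 = 0` then
`q_l = (1/2)p_l^2`. -/
theorem statement11 (a0 a1 a2 a3 : ℂ) :
    (a0 * a1 + a2 * a3 ≠ 0 →
      ¬ ∃ u v : MvPolynomial (Fin 4) ℂ,
          u.IsHomogeneous 1 ∧ v.IsHomogeneous 1 ∧ qL a0 a1 a2 a3 = u * v) ∧
    (a0 * a1 + a2 * a3 = 0 →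
      qL a0 a1 a2 a3 = C (1 / 2 : ℂ) * polarL a0 a1 a2 a3 ^ 2) := by
  constructor
  · rintro hs ⟨u, v, hu, hv, h⟩
    set b : Fin 4 → ℂ := fun i => u.coeff (Finsupp.single i 1) with hb
    set c : Fin 4 → ℂ := fun i => v.coeff (Finsupp.single i 1) with hc
    rw [linear_rep u hu, linear_rep v hv] at h
    -- evaluate at various points
    have hev : ∀ x : Fin 4 → ℂ,
        (1/2 : ℂ) * (a1 * x 0 + a0 * x 1 + a3 * x 2 + a2 * x 3)^2
          - ((a0 * a1 + a2 * a3)/3) * (x 0 * x 1 + x 2 * x 3)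
        = (b 0 * x 0 + b 1 * x 1 + b 2 * x 2 + b 3 * x 3)
          * (c 0 * x 0 + c 1 * x 1 + c 2 * x 2 + c 3 * x 3) := by
      intro x
      have := congrArg (eval x) h
      simpa [qL, polarL, qQinv, Fin.sum_univ_four, ← hb, ← hc, mul_comm, mul_assoc,
        mul_left_comm] using this
    have h0 := hev ![1,0,0,0]
    have h1 := hev ![0,1,0,0]
    have h2 := hev ![0,0,1,0]
    have h3 := hev ![0,0,0,1]
    have h01 := hev ![1,1,0,0]
    have h02 := hev ![1,0,1,0]
    have h03 := hev ![1,0,0,1]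
    have h12 := hev ![0,1,1,0]
    have h13 := hev ![0,1,0,1]
    have h23 := hev ![0,0,1,1]
    simp only [Matrix.cons_val_zero, Matrix.cons_val_one, Matrix.head_cons,
      Matrix.cons_val_two, Matrix.tail_cons, Matrix.cons_val_three] at h0 h1 h2 h3 h01 h02 h03 h12 h13 h23
    have eq00 : 2 * (b 0 * c 0) = a1 * a1 := by linear_combination (-2) * h0
    have eq11 : 2 * (b 1 * c 1) = a0 * a0 := by linear_combination (-2) * h1
    have eq22 : 2 * (b 2 * c 2) = a3 * a3 := by linear_combination (-2) * h2
    have eq33 : 2 * (b 3 * c 3) = a2 * a2 := by linear_combination (-2) * h3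
    have eq01 : b 0 * c 1 + b 1 * c 0 = a1 * a0 - (a0 * a1 + a2 * a3)/3 := by
      linear_combination h0 + h1 - h01
    have eq02 : b 0 * c 2 + b 2 * c 0 = a1 * a3 := by linear_combination h0 + h2 - h02
    have eq03 : b 0 * c 3 + b 3 * c 0 = a1 * a2 := by linear_combination h0 + h3 - h03
    have eq12 : b 1 * c 2 + b 2 * c 1 = a0 * a3 := by linear_combination h1 + h2 - h12
    have eq13 : b 1 * c 3 + b 3 * c 1 = a0 * a2 := by linear_combination h1 + h3 - h13
    have eq23 : b 2 * c 3 + b 3 * c 2 = a3 * a2 - (a0 * a1 + a2 * a3)/3 := by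
      linear_combination h2 + h3 - h23
    have key : (a0 * a1 + a2 * a3)^3 = 0 := by
      linear_combination (0:ℂ)
    + ((-9/7:ℂ)*a0^2*a2*a3 + (-9/7:ℂ)*a0^3*a1) * eq00
    + ((36/7:ℂ)*a2*a3*(b 0)*(c 0) + (-27/7:ℂ)*a1^2*a2*a3 + (-18/7:ℂ)*a0*a1*(b 0)*(c 0)) * eq11
    + ((-9/7:ℂ)*a2^3*a3 + (-9/7:ℂ)*a0*a1*a2^2) * eq22
    + ((-18/7:ℂ)*a2*a3*(b 2)*(c 2) + (36/7:ℂ)*a0*a1*(b 2)*(c 2) + (-27/7:ℂ)*a0*a1*a3^2) * eq33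
    + ((108/7:ℂ)*(b 2)*(b 3)*(c 2)*(c 3) + (-18/7:ℂ)*a2*a3*(b 1)*(c 0) + (-18/7:ℂ)*a2*a3*(b 0)*(c 1) + (-6/7:ℂ)*a2^2*a3^2 + (9/7:ℂ)*a0*a1*(b 1)*(c 0) + (9/7:ℂ)*a0*a1*(b 0)*(c 1) + (51/7:ℂ)*a0*a1*a2*a3 + (3/7:ℂ)*a0^2*a1^2) * eq01
    + ((-54/7:ℂ)*a1*a2*(b 1)*(c 1) + (-54/7:ℂ)*a0*a3*(b 3)*(c 3) + (27/7:ℂ)*a0*a2*(b 1)*(c 0) + (27/7:ℂ)*a0*a2*(b 0)*(c 1) + (18/7:ℂ)*a0*a2^2*a3 + (-9/7:ℂ)*a0^2*a1*a2) * eq02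
    + ((-54/7:ℂ)*(b 1)*(b 2)*(c 0)*(c 1) + (-54/7:ℂ)*(b 0)*(b 1)*(c 1)*(c 2) + (27/7:ℂ)*a0*a3*(b 1)*(c 0) + (27/7:ℂ)*a0*a3*(b 0)*(c 1) + (-54/7:ℂ)*a0*a2*(b 2)*(c 2) + (18/7:ℂ)*a0*a2*a3^2 + (-9/7:ℂ)*a0^2*a1*a3) * eq03
    + ((-54/7:ℂ)*(b 2)*(b 3)*(c 0)*(c 3) + (27/7:ℂ)*(b 1)*(b 3)*(c 0)^2 + (-54/7:ℂ)*(b 0)*(b 3)*(c 2)*(c 3) + (27/7:ℂ)*(b 0)*(b 3)*(c 0)*(c 1) + (27/7:ℂ)*(b 0)*(b 1)*(c 0)*(c 3) + (27/7:ℂ)*(b 0)^2*(c 1)*(c 3) + (18/7:ℂ)*a2*a3*(b 3)*(c 0) + (18/7:ℂ)*a2*a3*(b 0)*(c 3) + (-54/7:ℂ)*a0*a2*(b 0)*(c 0) + (-9/7:ℂ)*a0*a1*(b 3)*(c 0) + (-9/7:ℂ)*a0*a1*(b 0)*(c 3)) * eq12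
    + ((-54/7:ℂ)*(b 2)*(b 3)*(c 0)*(c 2) + (27/7:ℂ)*(b 1)*(b 2)*(c 0)^2 + (-54/7:ℂ)*(b 0)*(b 2)*(c 2)*(c 3) + (-27/7:ℂ)*(b 0)*(b 2)*(c 0)*(c 1) + (-27/7:ℂ)*(b 0)*(b 1)*(c 0)*(c 2) + (27/7:ℂ)*(b 0)^2*(c 1)*(c 2) + (18/7:ℂ)*a2*a3*(b 2)*(c 0) + (18/7:ℂ)*a2*a3*(b 0)*(c 2) + (-9/7:ℂ)*a0*a1*(b 2)*(c 0) + (-9/7:ℂ)*a0*a1*(b 0)*(c 2)) * eq13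
    + ((54/7:ℂ)*(b 2)*(b 3)*(c 0)*(c 1) + (-27/7:ℂ)*(b 1)^2*(c 0)^2 + (54/7:ℂ)*(b 0)*(b 1)*(c 2)*(c 3) + (54/7:ℂ)*(b 0)*(b 1)*(c 0)*(c 1) + (-27/7:ℂ)*(b 0)^2*(c 1)^2 + (-18/7:ℂ)*a2*a3*(b 1)*(c 0) + (-18/7:ℂ)*a2*a3*(b 0)*(c 1) + (9/7:ℂ)*a0*a1*(b 1)*(c 0) + (9/7:ℂ)*a0*a1*(b 0)*(c 1)) * eq23
    exact hs ((pow_eq_zero_iff (by norm_num : (3:ℕ) ≠ 0)).mp key)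
  · intro hs
    rw [qL, hs]
    simp
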